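/- (Case 2 of OP_DES.) Let β∘ = (1/Y)·(k_h/p_h − 1/b_h). If k_e·b_e/(1 + b_e·X) ≥ p_e, 0 < β∘ < 1, and X + Y·β∘ ≥ M_min, then (1, β∘) is a global maximizer of U on the feasible set D: U(1, β∘) ≥ U(α,β) for all (α,β) ∈ D. -/

import Mathlib

/-- The DES utility function `U(α,β)` with adaption coefficients
`b_e = (e−1)/X`, `b_h = (e−1)/Y`. -/
noncomputable def desU (X Y ke kh pe ph C0 : ℝ) (q : ℝ × ℝ) : ℝ :=
  ke * Real.log (1 + ((Real.exp 1 - 1) / X) * X * q.1)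
  + kh * Real.log (1 + ((Real.exp 1 - 1) / Y) * Y * q.2)
  + pe * X * (1 - q.1) + ph * Y * (1 - q.2) - C0

/-- The feasible set `D` of the DES optimization problem. -/
def desD (X Y Mmin : ℝ) : Set (ℝ × ℝ) :=
  {q | q.1 ∈ Set.Icc (0:ℝ) 1 ∧ q.2 ∈ Set.Icc (0:ℝ) 1 ∧ X * q.1 + Y * q.2 ≥ Mmin}

/-- Case 2 of OP_DES: if the marginal utility of electricity at `α = 1` still
exceeds the offered price, `(1, β∘)` is a global maximizer of `U` on `D`. -/
theorem stmt_8 (X Y ke kh pe ph C0 Mmin βo : ℝ)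
    (hX : 0 < X) (hY : 0 < Y) (hke : 0 < ke) (hkh : 0 < kh)
    (hpe : 0 < pe) (hph : 0 < ph)
    (hM : max X Y < Mmin) (hM' : Mmin < X + Y)
    (hβo : βo = (1 / Y) * (kh / ph - 1 / ((Real.exp 1 - 1) / Y)))
    (hmarg : ke * ((Real.exp 1 - 1) / X) / (1 + ((Real.exp 1 - 1) / X) * X) ≥ pe)
    (hβ1 : 0 < βo) (hβ2 : βo < 1)
    (hfeas : X + Y * βo ≥ Mmin) :
    ∀ q ∈ desD X Y Mmin,
      desU X Y ke kh pe ph C0 q ≤ desU X Y ke kh pe ph C0 ((1:ℝ), βo) := by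
  have hE : 0 < Real.exp 1 - 1 := by nlinarith [Real.exp_one_gt_d9]
  intro q hq
  obtain ⟨⟨ha0, ha1⟩, ⟨hb0, hb1⟩, -⟩ := hq
  simp only [desU]
  generalize hEdef : Real.exp 1 - 1 = E at hE hβo hmarg ⊢
  have hXE : E / X * X = E := div_mul_cancel₀ _ hX.ne'
  have hYE : E / Y * Y = E := div_mul_cancel₀ _ hY.ne'
  rw [hXE] at hmarg ⊢
  rw [hYE]
  have hmargX : pe * X ≤ ke * E / (1 + E) := by
    have h := mul_le_mul_of_nonneg_right (ge_iff_le.mp hmarg) hX.le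
    have he : ke * (E / X) / (1 + E) * X = ke * E / (1 + E) := by
      field_simp
    linarith [he ▸ h]
  have h1p : 0 < 1 + E * q.1 := by nlinarith
  have h1E : 0 < 1 + E := by linarith
  have h2p : 0 < 1 + E * q.2 := by nlinarith
  have hkey' : (1 + E * βo) * (Y * ph) = E * kh := by
    rw [hβo]; field_simp; ring
  have hkey : 1 + E * βo = E * kh / (Y * ph) := by
    rw [eq_div_iff (by positivity)]; exact hkey'
  have hop : 0 < 1 + E * βo := by rw [hkey]; positivity
  have hA : ke * Real.log (1 + E * q.1) + pe * X * (1 - q.1)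
      ≤ ke * Real.log (1 + E * 1) := by
    have hlog := Real.log_le_sub_one_of_pos
      (show 0 < (1 + E * q.1) / (1 + E) from div_pos h1p h1E)
    rw [Real.log_div h1p.ne' h1E.ne'] at hlog
    have h2 : (1 + E * q.1) / (1 + E) - 1 = (E * q.1 - E) / (1 + E) := by
      field_simp
      ring
    rw [h2] at hlog
    have h3 : ke * ((E * q.1 - E) / (1 + E)) = -(ke * E / (1 + E)) * (1 - q.1) := by
      field_simp; ring
    have h4 : ke * (Real.log (1 + E * q.1) - Real.log (1 + E))
        ≤ -(ke * E / (1 + E)) * (1 - q.1) := by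
      rw [← h3]; exact mul_le_mul_of_nonneg_left hlog hke.le
    have h5 : pe * X * (1 - q.1) ≤ ke * E / (1 + E) * (1 - q.1) :=
      mul_le_mul_of_nonneg_right hmargX (by linarith)
    have heq : (1 : ℝ) + E * 1 = 1 + E := by ring
    rw [heq]
    rw [mul_sub] at h4
    linarith [h4, h5]
  have hB : kh * Real.log (1 + E * q.2) + ph * Y * (1 - q.2)
      ≤ kh * Real.log (1 + E * βo) + ph * Y * (1 - βo) := by
    have hlog := Real.log_le_sub_one_of_pos
      (show 0 < (1 + E * q.2) / (1 + E * βo) from div_pos h2p hop)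
    rw [Real.log_div h2p.ne' hop.ne'] at hlog
    have h6 : kh * ((1 + E * q.2) / (1 + E * βo) - 1) = ph * Y * (q.2 - βo) := by
      field_simp
      linear_combination (βo - q.2) * hkey'
    have h7 := mul_le_mul_of_nonneg_left hlog hkh.le
    rw [h6, mul_sub] at h7
    linarith [h7]
  linarith [hA, hB]
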